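/- Let x, y, z ∈ ℂ be roots of unity satisfying xyz + x + y + z = 0. Then some pair among {x, y, z} consists of 1 and −1; that is, (x,y) ∈ {(1,−1),(−1,1)}, or (x,z) ∈ {(1,−1),(−1,1)}, or (y,z) ∈ {(1,−1),(−1,1)}. -/

import Mathlib

/-- A complex number is a root of unity if some positive power of it equals `1`. -/
def IsRootOfUnity (ζ : ℂ) : Prop := ∃ n : ℕ, 0 < n ∧ ζ ^ n = 1

lemma isRootOfUnity_abs {x : ℂ} (hx : IsRootOfUnity x) : ‖x‖ = 1 := by
  obtain ⟨n, hn, hxn⟩ := hx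
  have h1 : ‖x‖ ^ n = 1 := by
    rw [← norm_pow, hxn, norm_one]
  rcases pow_eq_one_iff_cases.mp h1 with h | h | h
  · omega
  · exact h
  · exfalso; nlinarith [norm_nonneg x, h.1]

/-- If roots of unity satisfy `xyz + x + y + z = 0`, then some pair among them is
`{1, −1}`. -/
theorem stmt_14 (x y z : ℂ) (hx : IsRootOfUnity x) (hy : IsRootOfUnity y)
    (hz : IsRootOfUnity z) (h : x * y * z + x + y + z = 0) :
    ((x = 1 ∧ y = -1) ∨ (x = -1 ∧ y = 1)) ∨
    ((x = 1 ∧ z = -1) ∨ (x = -1 ∧ z = 1)) ∨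
    ((y = 1 ∧ z = -1) ∨ (y = -1 ∧ z = 1)) := by
  have hax := isRootOfUnity_abs hx
  have hay := isRootOfUnity_abs hy
  have haz := isRootOfUnity_abs hz
  have hx0 : x ≠ 0 := by intro h0; simp [h0] at hax
  have hy0 : y ≠ 0 := by intro h0; simp [h0] at hay
  have hz0 : z ≠ 0 := by intro h0; simp [h0] at haz
  -- conjugate identity: xy + yz + xz + 1 = 0
  have h2 : x*y + y*z + x*z + 1 = 0 := by
    have hc := congrArg (starRingEnd ℂ) h
    simp only [map_add, map_mul, map_zero] at hc
    rw [← Complex.inv_eq_conj hax, ← Complex.inv_eq_conj hay, ← Complex.inv_eq_conj haz] at hc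
    have hc2 : (x*y*z)*(x⁻¹*y⁻¹*z⁻¹ + x⁻¹ + y⁻¹ + z⁻¹) = 0 := by rw [hc, mul_zero]
    have ex : x * x⁻¹ = 1 := mul_inv_cancel₀ hx0
    have ey : y * y⁻¹ = 1 := mul_inv_cancel₀ hy0
    have ez : z * z⁻¹ = 1 := mul_inv_cancel₀ hz0
    linear_combination hc2 - (y*z + y*y⁻¹*z*z⁻¹) * ex - (x*z + z*z⁻¹) * ey - (x*y + 1) * ez
  -- factorization: each variable is 1, -1, or kills the product of the other two
  have fact : ∀ a b c : ℂ, a ≠ 0 → a * b * c + a + b + c = 0 →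
      a*b + b*c + a*c + 1 = 0 → a = 1 ∨ a = -1 ∨ b * c = -1 := by
    intro a b c ha0 H H2
    have key : a * ((a-1)*(a+1)*(1+b*c)) = 0 := by
      linear_combination a^2 * H - a * H2
    rcases mul_eq_zero.mp key with h0 | h0
    · exact absurd h0 ha0
    rcases mul_eq_zero.mp h0 with h1 | h1
    · rcases mul_eq_zero.mp h1 with h3 | h3
      · exact Or.inl (by linear_combination h3)
      · exact Or.inr (Or.inl (by linear_combination h3))
    · exact Or.inr (Or.inr (by linear_combination h1))
  have hxc := fact x y z hx0 h h2
  have hyc := fact y x z hy0 (by linear_combination h) (by linear_combination h2)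
  have hzc := fact z x y hz0 (by linear_combination h) (by linear_combination h2)
  rcases hxc with hx1 | hx1 | hyz
  · rcases hyc with hy1 | hy1 | hxz
    · have hz1 : z = -1 := by rw [hx1, hy1] at h; linear_combination h/2
      exact Or.inr (Or.inl (Or.inl ⟨hx1, hz1⟩))
    · exact Or.inl (Or.inl ⟨hx1, hy1⟩)
    · have hz1 : z = -1 := by rw [hx1] at hxz; linear_combination hxz
      exact Or.inr (Or.inl (Or.inl ⟨hx1, hz1⟩))
  · rcases hyc with hy1 | hy1 | hxz
    · exact Or.inl (Or.inr ⟨hx1, hy1⟩)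
    · have hz1 : z = 1 := by rw [hx1, hy1] at h; linear_combination h/2
      exact Or.inr (Or.inl (Or.inr ⟨hx1, hz1⟩))
    · have hz1 : z = 1 := by rw [hx1] at hxz; linear_combination -hxz
      exact Or.inr (Or.inl (Or.inr ⟨hx1, hz1⟩))
  · rcases hyc with hy1 | hy1 | hxz
    · have hz1 : z = -1 := by rw [hy1] at hyz; linear_combination hyz
      exact Or.inr (Or.inr (Or.inl ⟨hy1, hz1⟩))
    · have hz1 : z = 1 := by rw [hy1] at hyz; linear_combination -hyz
      exact Or.inr (Or.inr (Or.inr ⟨hy1, hz1⟩))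
    · rcases hzc with hz1 | hz1 | hxy
      · have hy1 : y = -1 := by rw [hz1] at hyz; linear_combination hyz
        exact Or.inr (Or.inr (Or.inr ⟨hy1, hz1⟩))
      · have hy1 : y = 1 := by rw [hz1] at hyz; linear_combination -hyz
        exact Or.inr (Or.inr (Or.inl ⟨hy1, hz1⟩))
      · exfalso
        have hxy' : x = y := by
          have hd : (x - y) * z = 0 := by linear_combination hxz - hyz
          rcases mul_eq_zero.mp hd with h3 | h3
          · linear_combination h3
          · exact absurd h3 hz0
        rw [hxy'] at h hxy
        exact hy0 (by linear_combination (h - z * hxy)/2)
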